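/- Let N be a positive integer and n = 2^N - 1. Then for all x, y, q in ℚ (or any commutative ring), (x+y)(x+qy)⋯(x+q^{N-1}y) = ∑_{m=0}^{n} q^{z_n(m)} x^{s(m)} y^{s(n-m)}. -/

import Mathlib

/-- Binary sum-of-digits function. -/
def sdig (m : ℕ) : ℕ := (Nat.digits 2 m).sum

/-- The `i`-th digit of `m` in base `b`. -/
def dig (b m i : ℕ) : ℕ := m / b ^ i % b

/-- `z_n(m) = ∑_{k=0}^{N-1} k·(1 - δ(n_k, m_k))`, the weighted count of positions
among the `N` lowest binary digits at which `m` and `n` differ. -/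
def zfun (N n m : ℕ) : ℕ :=
  ∑ k ∈ Finset.range N, k * (1 - if dig 2 n k = dig 2 m k then 1 else 0)

lemma dig_succ (m k : ℕ) : dig 2 m (k+1) = dig 2 (m/2) k := by
  simp [dig, pow_succ, Nat.div_div_eq_div_mul, mul_comm]

lemma sdig_sum : ∀ N, ∀ m < 2^N, sdig m = ∑ k ∈ Finset.range N, dig 2 m k := by
  intro N
  induction N with
  | zero => intro m hm; interval_cases m; simp [sdig]
  | succ N ih =>
    intro m hm
    rcases Nat.eq_zero_or_pos m with h | h
    · subst h; simp [sdig, dig]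
    rw [Finset.sum_range_succ']
    have h2 : m / 2 < 2 ^ N := by
      rw [Nat.div_lt_iff_lt_mul (by norm_num)]
      calc m < 2^(N+1) := hm
        _ = 2^N * 2 := by ring
    have := ih (m/2) h2
    simp only [dig_succ]
    rw [← this]
    have : dig 2 m 0 = m % 2 := by simp [dig]
    rw [this]
    unfold sdig
    rw [Nat.digits_def' (by norm_num : 1 < 2) h]
    simp [add_comm]

lemma dig_add_pow (N i k : ℕ) (hk : k < N) :
    dig 2 (2^N + i) k = dig 2 i k := by
  unfold dig
  have h1 : 2^N + i = 2^k * (2 * 2^(N-k-1)) + i := by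
    rw [← pow_succ']
    congr 2
    rw [← pow_add]
    congr 1
    omega
  rw [h1, Nat.mul_add_div (by positivity), Nat.mul_add_mod]

lemma dig_high (N i : ℕ) (hi : i < 2^N) : dig 2 (2^N + i) N = 1 := by
  unfold dig
  rw [Nat.add_div_left _ (by positivity), Nat.div_eq_of_lt hi]

lemma dig_zero_of_lt (N i : ℕ) (hi : i < 2^N) : dig 2 i N = 0 := by
  unfold dig
  rw [Nat.div_eq_of_lt hi]

lemma dig_ones (M k : ℕ) (hk : k < M) : dig 2 (2^M - 1) k = 1 := by
  unfold dig
  have h2 : 2^k * 2^(M-k) = 2^M := by rw [← pow_add]; congr 1; omega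
  have h3 : 0 < 2^k := by positivity
  have hD0 : 0 < 2^(M-k-1) := by positivity
  have h6 : 2 * 2^(M-k-1) = 2^(M-k) := by rw [← pow_succ']; congr 1; omega
  have h5 : 2^k * (2^(M-k) - 1) = 2^M - 2^k := by rw [Nat.mul_sub, h2, mul_one]
  generalize hA : (2:ℕ)^k = A at h2 h3 h5 ⊢
  generalize hB : (2:ℕ)^M = B at h2 h5 ⊢
  generalize hC : (2:ℕ)^(M-k) = C at h2 h5 h6
  generalize hD : (2:ℕ)^(M-k-1) = D at h6 hD0
  have hAB : A ≤ B := by nlinarith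
  have h1 : B - 1 = A * (C - 1) + (A - 1) := by omega
  rw [h1, Nat.mul_add_div h3, Nat.div_eq_of_lt (by omega), add_zero]
  omega

lemma sdig_add_pow (N i : ℕ) (hi : i < 2^N) : sdig (2^N + i) = sdig i + 1 := by
  have hlt : 2^N + i < 2^(N+1) := by
    have : 2^(N+1) = 2^N + 2^N := by ring
    omega
  rw [sdig_sum (N+1) _ hlt, Finset.sum_range_succ, dig_high N i hi,
    sdig_sum N i hi]
  congr 1
  exact Finset.sum_congr rfl fun k hk => dig_add_pow N i k (Finset.mem_range.mp hk)

lemma key (x y q : ℚ) : ∀ N, ∏ i ∈ Finset.range N, (x + q ^ i * y) =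
    ∑ m ∈ Finset.range (2^N),
      q ^ zfun N (2^N-1) m * x ^ sdig m * y ^ sdig (2^N-1-m) := by
  intro N
  induction N with
  | zero => simp [zfun, sdig]
  | succ N ih =>
    have hpow : (2:ℕ)^(N+1) = 2^N + 2^N := by ring
    rw [Finset.prod_range_succ, ih, show Finset.range (2^(N+1)) = Finset.range (2^N + 2^N) by rw [hpow], Finset.sum_range_add]
    have key1 : ∀ i < 2^N,
        q ^ zfun (N+1) (2^(N+1)-1) (2^N + i) * x ^ sdig (2^N + i) *
          y ^ sdig (2^(N+1)-1-(2^N + i)) =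
        x * (q ^ zfun N (2^N-1) i * x ^ sdig i * y ^ sdig (2^N-1-i)) := by
      intro i hi
      have hz : zfun (N+1) (2^(N+1)-1) (2^N + i) = zfun N (2^N-1) i := by
        unfold zfun
        rw [Finset.sum_range_succ, dig_ones (N+1) N (by omega), dig_high N i hi]
        simp only [eq_self_iff_true, if_true, Nat.sub_self, mul_zero, add_zero]
        apply Finset.sum_congr rfl
        intro k hk
        have hkN := Finset.mem_range.mp hk
        rw [dig_ones (N+1) k (by omega), dig_ones N k hkN, dig_add_pow N i k hkN]
      have hsub : 2^(N+1)-1-(2^N + i) = 2^N-1-i := by omega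
      rw [hz, hsub, sdig_add_pow N i hi]
      ring
    have key2 : ∀ i < 2^N,
        q ^ zfun (N+1) (2^(N+1)-1) i * x ^ sdig i * y ^ sdig (2^(N+1)-1-i) =
        (q^N * y) * (q ^ zfun N (2^N-1) i * x ^ sdig i * y ^ sdig (2^N-1-i)) := by
      intro i hi
      have hz : zfun (N+1) (2^(N+1)-1) i = zfun N (2^N-1) i + N := by
        unfold zfun
        rw [Finset.sum_range_succ, dig_ones (N+1) N (by omega), dig_zero_of_lt N i hi]
        simp only [if_neg (by norm_num : (1:ℕ) ≠ 0), mul_one, Nat.sub_zero]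
        congr 1
        apply Finset.sum_congr rfl
        intro k hk
        have hkN := Finset.mem_range.mp hk
        rw [dig_ones (N+1) k (by omega), dig_ones N k hkN]
      have hsub : 2^(N+1)-1-i = 2^N + (2^N-1-i) := by omega
      have hlt : 2^N-1-i < 2^N := by omega
      rw [hz, hsub, sdig_add_pow N _ hlt, pow_add]
      ring
    rw [Finset.sum_congr rfl (fun i hi => key1 i (Finset.mem_range.mp hi)),
      Finset.sum_congr rfl (fun i hi => key2 i (Finset.mem_range.mp hi)),
      ← Finset.mul_sum, ← Finset.mul_sum]
    ring

/-- The special case `n = 2^N - 1` of the q-digital binomial theorem: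
`(x+y)(x+qy)⋯(x+q^{N-1}y) = ∑_{m=0}^{n} q^{z_n(m)} x^{s(m)} y^{s(n-m)}`. -/
theorem q_digital_binomial_special (N : ℕ) (hN : 0 < N) (n : ℕ) (hn : n = 2 ^ N - 1)
    (x y q : ℚ) :
    (∏ i ∈ Finset.range N, (x + q ^ i * y)) =
      ∑ m ∈ Finset.range (n + 1), q ^ zfun N n m * x ^ sdig m * y ^ sdig (n - m) := by
  subst hn
  have h : 2^N - 1 + 1 = 2^N := by
    have : 0 < 2^N := by positivity
    omega
  rw [h]
  exact key x y q N
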